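/- Suppose x_N = M. Then the partition function evaluated at v_M = u_N satisfies the recursion W_{M,N}(u₁,…,u_N|v₁,…,v_M|x₁,…,x_N|a₁₂)|_{v_M = u_N} = ∏_{j=1}^{N−1} ([1 − u_j + u_N]/[1]) · ∏_{j=1}^{M−1} ([1 + u_N − v_j]/[1]) · W_{M−1,N−1}(u₁,…,u_{N−1}|v₁,…,v_{M−1}|x₁,…,x_{N−1}|a₁₂ + 1). -/

import Mathlib

open Complex

noncomputable section

/-- The half period magnitude `K₁` for elliptic nome `q`. -/
def Kone (q : ℝ) : ℝ :=
  Real.pi / 2 * ∏' n : ℕ,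
    ((1 + q ^ (2 * n + 1)) / (1 - q ^ (2 * n + 1)) *
      ((1 - q ^ (2 * n + 2)) / (1 + q ^ (2 * n + 2)))) ^ 2

/-- The half period magnitude `K₂` for elliptic nome `q`. -/
def Ktwo (q : ℝ) : ℝ := -(Kone q / Real.pi) * Real.log q

/-- The elliptic theta function `H`. -/
def theta (q : ℝ) (u : ℂ) : ℂ :=
  2 * (q : ℂ) ^ (1 / 4 : ℂ) * Complex.sin (Real.pi * u / (2 * (Kone q : ℂ))) *
    ∏' n : ℕ,
      ((1 - 2 * (q : ℂ) ^ (2 * n + 2) * Complex.cos (Real.pi * u / (Kone q : ℂ)) +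
          (q : ℂ) ^ (4 * n + 4)) * (1 - (q : ℂ) ^ (2 * n + 2)))

/-- The bracket `[u] = H(λu)`. -/
def brak (q : ℝ) (lam : ℂ) (u : ℂ) : ℂ := theta q (lam * u)

/-- Unit vector ê₁. -/
def e1 : ℤ × ℤ := (1, 0)

/-- Unit vector ê₂. -/
def e2 : ℤ × ℤ := (0, 1)

/-- The scalar `a₁₂ = a₁ + a₂ + ω₁₂` attached to a state vector. -/
def aSc (ω12 : ℂ) (a : ℤ × ℤ) : ℂ := (a.1 : ℂ) + (a.2 : ℂ) + ω12

/-- The face weights of the Deguchi-Martin model. -/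
def faceW (q : ℝ) (lam ω12 : ℂ) (a b c d : ℤ × ℤ) (u v : ℂ) : ℂ :=
  if b = a + e1 ∧ c = a + e1 ∧ d = a + e1 + e1 then
    brak q lam (1 + (u - v)) / brak q lam 1
  else if b = a + e2 ∧ c = a + e2 ∧ d = a + e2 + e2 then
    brak q lam (1 - (u - v)) / brak q lam 1
  else if b = a + e2 ∧ c = a + e1 ∧ d = a + e1 + e2 then
    brak q lam (u - v) * brak q lam (aSc ω12 a - 1) / (brak q lam 1 * brak q lam (aSc ω12 a))
  else if b = a + e1 ∧ c = a + e2 ∧ d = a + e1 + e2 then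
    brak q lam (u - v) * brak q lam (-aSc ω12 a - 1) / (brak q lam 1 * brak q lam (-aSc ω12 a))
  else if b = a + e1 ∧ c = a + e1 ∧ d = a + e1 + e2 then
    brak q lam (aSc ω12 a - (u - v)) / brak q lam (aSc ω12 a)
  else if b = a + e2 ∧ c = a + e2 ∧ d = a + e1 + e2 then
    brak q lam (-aSc ω12 a - (u - v)) / brak q lam (-aSc ω12 a)
  else 0

/-- Number of the integers `x₁ < ⋯ < x_N` that are `≤ k`. -/
def btmCount (N : ℕ) (x : ℕ → ℕ) (k : ℕ) : ℕ :=
  ((Finset.Icc 1 N).filter fun j => x j ≤ k).card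

open scoped Classical in
/-- The partition function `W_{M,N}(u₁,…,u_N|v₁,…,v_M|x₁,…,x_N|a₁₂)` of the
Deguchi-Martin model: the sum over all state-vector configurations of the
`N`-row, `M`-column lattice with the prescribed boundary of the product of all
`M·N` face weights. -/
def partW (q : ℝ) (lam ω12 : ℂ) (M N : ℕ) (u v : ℕ → ℂ) (x : ℕ → ℕ)
    (a : ℤ × ℤ) : ℂ :=
  ∑' s : Fin (N + 1) × Fin (M + 1) → ℤ × ℤ,
    if (∀ k : Fin (M + 1), s (0, k) = a + ((k : ℕ) : ℤ) • e1) ∧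
       (∀ i : Fin (N + 1), s (i, 0) = a + ((i : ℕ) : ℤ) • e1) ∧
       (∀ i : Fin (N + 1), s (i, Fin.last M) = a + (M : ℤ) • e1 + ((i : ℕ) : ℤ) • e2) ∧
       (∀ k : Fin (M + 1), s (Fin.last N, k) =
          a + ((N : ℤ) + ((k : ℕ) : ℤ) - (btmCount N x (k : ℕ) : ℤ)) • e1 +
            (btmCount N x (k : ℕ) : ℤ) • e2)
    then
      ∏ i : Fin N, ∏ k : Fin M,
        faceW q lam ω12 (s (i.castSucc, k.castSucc)) (s (i.castSucc, k.succ))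
          (s (i.succ, k.castSucc)) (s (i.succ, k.succ)) (u (N - (i : ℕ))) (v ((k : ℕ) + 1))
    else 0

/-! ### Auxiliary lemmas -/

lemma brak_zero (q : ℝ) (lam : ℂ) : brak q lam 0 = 0 := by
  simp [brak, theta]

section Face
variable (q : ℝ) (lam ω12 : ℂ)

lemma ne_ee1 : e1 ≠ e2 := by decide
lemma ne_a12 (a : ℤ×ℤ) : a + e1 ≠ a + e2 := fun h => ne_ee1 (add_left_cancel h)
lemma ne_a21 (a : ℤ×ℤ) : a + e2 ≠ a + e1 := fun h => ne_ee1 (add_left_cancel h).symm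

lemma faceW_eval1 (a : ℤ×ℤ) (u v : ℂ) :
    faceW q lam ω12 a (a+e1) (a+e1) (a+e1+e1) u v = brak q lam (1+(u-v)) / brak q lam 1 := by
  rw [faceW, if_pos ⟨rfl, rfl, rfl⟩]

lemma faceW_eval2 (a : ℤ×ℤ) (u v : ℂ) :
    faceW q lam ω12 a (a+e2) (a+e2) (a+e2+e2) u v = brak q lam (1-(u-v)) / brak q lam 1 := by
  rw [faceW, if_neg (fun h => ne_a21 a h.1), if_pos ⟨rfl, rfl, rfl⟩]

lemma faceW_eval5 (a : ℤ×ℤ) (u : ℂ) (hbrA : brak q lam (aSc ω12 a) ≠ 0) :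
    faceW q lam ω12 a (a+e1) (a+e1) (a+e1+e2) u u = 1 := by
  rw [faceW, if_neg (fun h => ne_a12 (a+e1) h.2.2.symm), if_neg (fun h => ne_a12 a h.1),
    if_neg (fun h => ne_a12 a h.1), if_neg (fun h => ne_a12 a h.2.1),
    if_pos ⟨rfl, rfl, rfl⟩, sub_self, sub_zero, div_self hbrA]

lemma freeze_row {a c : ℤ×ℤ} {u v : ℂ}
    (h : faceW q lam ω12 a (a+e1) c (a+e1+e1) u v ≠ 0) : c = a + e1 := by
  by_contra hc
  apply h
  rw [faceW, if_neg (fun h => hc h.2.1), if_neg (fun h => ne_a12 a h.1),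
    if_neg (fun h => ne_a12 a h.1), if_neg (fun h => ne_a12 (a+e1) h.2.2),
    if_neg (fun h => ne_a12 (a+e1) h.2.2), if_neg (fun h => ne_a12 a h.1)]

lemma freeze_col {a c : ℤ×ℤ} {u v : ℂ}
    (h : faceW q lam ω12 a (a+e2) c (a+e2+e2) u v ≠ 0) : c = a + e2 := by
  by_contra hc
  apply h
  have hd : a + e2 + e2 ≠ a + e1 + e2 := fun h => ne_a21 a (add_right_cancel h)
  rw [faceW, if_neg (fun h => ne_a21 a h.1), if_neg (fun h => hc h.2.1),
    if_neg (fun h => hd h.2.2), if_neg (fun h => ne_a21 a h.1),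
    if_neg (fun h => ne_a21 a h.1), if_neg (fun h => hd h.2.2)]

lemma freeze_corner {a c : ℤ×ℤ} {u : ℂ}
    (h : faceW q lam ω12 a (a+e1) c (a+e1+e2) u u ≠ 0) : c = a + e1 := by
  by_contra hc
  apply h
  rw [faceW, if_neg (fun h => ne_a12 (a+e1) h.2.2.symm), if_neg (fun h => ne_a12 a h.1),
    if_neg (fun h => ne_a12 a h.1)]
  by_cases h4 : (a+e1 = a + e1 ∧ c = a + e2 ∧ a+e1+e2 = a + e1 + e2)
  · rw [if_pos h4, sub_self, brak_zero, zero_mul, zero_div]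
  · rw [if_neg h4, if_neg (fun h => hc h.2.1), if_neg (fun h => ne_a12 a h.1)]

end Face

/-- Extension map realizing the frozen first row and last column. -/
def phi (a : ℤ×ℤ) (N M : ℕ) (t : Fin (N+1) × Fin (M+1) → ℤ×ℤ) :
    Fin (N+1+1) × Fin (M+1+1) → ℤ×ℤ := fun p =>
  if (p.1 : ℕ) = 0 then a + ((p.2 : ℕ) : ℤ) • e1
  else if h2 : (p.2 : ℕ) = M+1 then a + ((M+1 : ℕ) : ℤ) • e1 + ((p.1 : ℕ) : ℤ) • e2
  else t (⟨(p.1 : ℕ) - 1, by have := p.1.isLt; omega⟩,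
          ⟨(p.2 : ℕ), by have := p.2.isLt; omega⟩)

lemma phi_zero (a : ℤ×ℤ) (N M : ℕ) (t : Fin (N+1) × Fin (M+1) → ℤ×ℤ)
    (i : Fin (N+2)) (k : Fin (M+2)) (hi : (i : ℕ) = 0) :
    phi a N M t (i, k) = a + ((k : ℕ) : ℤ) • e1 := by
  simp [phi, hi]

lemma phi_last (a : ℤ×ℤ) (N M : ℕ) (t : Fin (N+1) × Fin (M+1) → ℤ×ℤ)
    (i : Fin (N+2)) (k : Fin (M+2)) (hi : (i : ℕ) ≠ 0) (hk : (k : ℕ) = M+1) :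
    phi a N M t (i, k) = a + ((M+1 : ℕ) : ℤ) • e1 + ((i : ℕ) : ℤ) • e2 := by
  simp [phi, hi, hk]

lemma phi_mid (a : ℤ×ℤ) (N M : ℕ) (t : Fin (N+1) × Fin (M+1) → ℤ×ℤ)
    (i : Fin (N+2)) (k : Fin (M+2)) (hi : (i : ℕ) ≠ 0) (hk : (k : ℕ) < M+1)
    (i' : Fin (N+1)) (k' : Fin (M+1)) (hi' : (i' : ℕ) + 1 = (i : ℕ)) (hk' : (k' : ℕ) = (k : ℕ)) :
    phi a N M t (i, k) = t (i', k') := by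
  simp only [phi, if_neg hi, dif_neg (by omega : ¬ (k : ℕ) = M+1)]
  congr 1
  refine Prod.ext (Fin.ext ?_) (Fin.ext ?_) <;> simp <;> omega

lemma phi_injective (a : ℤ×ℤ) (N M : ℕ) : Function.Injective (phi a N M) := by
  intro t1 t2 h
  funext p
  obtain ⟨i, k⟩ := p
  have := congrFun h (i.succ, k.castSucc)
  rwa [phi_mid a N M t1 i.succ k.castSucc (by simp) (by simpa using k.isLt) i k (by simp) (by simp),
    phi_mid a N M t2 i.succ k.castSucc (by simp) (by simpa using k.isLt) i k (by simp) (by simp)] at this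

section Btm

variable {N M : ℕ} {x : ℕ → ℕ}

lemma btm_drop (hxmono : ∀ j k, 1 ≤ j → j < k → k ≤ N+1 → x j < x k)
    (hxN : x (N+1) = M+1) (k : ℕ) (hk : k ≤ M) :
    btmCount (N+1) x k = btmCount N x k := by
  unfold btmCount
  rw [show Finset.Icc 1 (N+1) = insert (N+1) (Finset.Icc 1 N) by
    ext j; simp [Finset.mem_Icc]; omega]
  rw [Finset.filter_insert, if_neg (by omega)]

lemma btm_full (hxmono : ∀ j k, 1 ≤ j → j < k → k ≤ N+1 → x j < x k)
    (hxN : x (N+1) = M+1) : btmCount N x M = N := by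
  unfold btmCount
  rw [Finset.filter_true_of_mem, Nat.card_Icc]
  · omega
  · intro j hj
    simp only [Finset.mem_Icc] at hj
    have := hxmono j (N+1) hj.1 (by omega) le_rfl
    omega

lemma btm_last (hxmono : ∀ j k, 1 ≤ j → j < k → k ≤ N+1 → x j < x k)
    (hxN : x (N+1) = M+1) : btmCount (N+1) x (M+1) = N+1 := by
  unfold btmCount
  rw [Finset.filter_true_of_mem, Nat.card_Icc]
  · omega
  · intro j hj
    simp only [Finset.mem_Icc] at hj
    rcases eq_or_lt_of_le hj.2 with h | h
    · rw [h, hxN]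
    · have h2 := hxmono j (N+1) hj.1 (by omega) le_rfl
      rw [hxN] at h2
      omega

end Btm

/-- Boundary condition of the lattice (as in `partW`). -/
def bigC (a : ℤ×ℤ) (N M : ℕ) (x : ℕ → ℕ) (s : Fin (N+1) × Fin (M+1) → ℤ×ℤ) : Prop :=
  (∀ k : Fin (M+1), s (0, k) = a + ((k : ℕ) : ℤ) • e1) ∧
  (∀ i : Fin (N+1), s (i, 0) = a + ((i : ℕ) : ℤ) • e1) ∧
  (∀ i : Fin (N+1), s (i, Fin.last M) = a + (M : ℤ) • e1 + ((i : ℕ) : ℤ) • e2) ∧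
  (∀ k : Fin (M+1), s (Fin.last N, k) =
      a + ((N : ℤ) + ((k : ℕ) : ℤ) - (btmCount N x (k : ℕ) : ℤ)) • e1 +
        (btmCount N x (k : ℕ) : ℤ) • e2)

/-- Product of all face weights (as in `partW`). -/
def bigP (q : ℝ) (lam ω12 : ℂ) (N M : ℕ) (u v : ℕ → ℂ)
    (s : Fin (N+1) × Fin (M+1) → ℤ×ℤ) : ℂ :=
  ∏ i : Fin N, ∏ k : Fin M,
    faceW q lam ω12 (s (i.castSucc, k.castSucc)) (s (i.castSucc, k.succ))
      (s (i.succ, k.castSucc)) (s (i.succ, k.succ)) (u (N - (i : ℕ))) (v ((k : ℕ) + 1))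

open scoped Classical in
lemma partW_eq (q : ℝ) (lam ω12 : ℂ) (M N : ℕ) (u v : ℕ → ℂ) (x : ℕ → ℕ) (a : ℤ×ℤ) :
    partW q lam ω12 M N u v x a =
      ∑' s : Fin (N+1) × Fin (M+1) → ℤ×ℤ,
        if bigC a N M x s then bigP q lam ω12 N M u v s else 0 := by
  simp only [partW, bigC, bigP]
  exact tsum_congr fun s => by congr

section L1

variable {q : ℝ} {lam ω12 : ℂ} {n m : ℕ} {x : ℕ → ℕ} {a : ℤ×ℤ}

lemma L1 (hxmono : ∀ j k, 1 ≤ j → j < k → k ≤ n+1 → x j < x k) (hxN : x (n+1) = m+1)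
    (t : Fin (n+1) × Fin (m+1) → ℤ×ℤ) (hS : bigC (a+e1) n m x t) :
    bigC a (n+1) (m+1) x (phi a n m t) := by
  obtain ⟨hS1, hS2, hS3, hS4⟩ := hS
  refine ⟨fun k => phi_zero a n m t 0 k (by simp), fun i => ?_, fun i => ?_, fun k => ?_⟩
  · by_cases hi : (i : ℕ) = 0
    · rw [phi_zero a n m t i 0 hi, hi]
      simp
    · rw [phi_mid a n m t i 0 hi (by simp) ⟨(i : ℕ) - 1, by have := i.isLt; omega⟩ 0
        (by simp; omega) (by simp), hS2]
      have h1 : (((i : ℕ) - 1 : ℕ) : ℤ) = ((i : ℕ) : ℤ) - 1 := by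
        have : 1 ≤ (i : ℕ) := by omega
        push_cast [this]; ring
      simp only [h1]
      module
  · by_cases hi : (i : ℕ) = 0
    · rw [phi_zero a n m t i (Fin.last (m+1)) hi, hi]
      simp
    · rw [phi_last a n m t i (Fin.last (m+1)) hi (by simp)]
  · by_cases hk : (k : ℕ) = m+1
    · rw [phi_last a n m t (Fin.last (n+1)) k (by simp) hk, hk,
        btm_last hxmono hxN]
      push_cast
      module
    · have hklt : (k : ℕ) < m + 1 := by have := k.isLt; omega
      rw [phi_mid a n m t (Fin.last (n+1)) k (by simp) hklt (Fin.last n) ⟨(k : ℕ), hklt⟩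
        (by simp) (by simp), hS4, btm_drop hxmono hxN (k : ℕ) (by omega)]
      push_cast
      module

end L1

section L3

variable {q : ℝ} {lam ω12 : ℂ} {n m : ℕ} {u v' : ℕ → ℂ} {x : ℕ → ℕ} {a : ℤ×ℤ}

lemma L3 (hxmono : ∀ j k, 1 ≤ j → j < k → k ≤ n+1 → x j < x k) (hxN : x (n+1) = m+1)
    (hVm : v' (m+1) = u (n+1))
    (s : Fin (n+1+1) × Fin (m+1+1) → ℤ×ℤ) (hB : bigC a (n+1) (m+1) x s)
    (hP : bigP q lam ω12 (n+1) (m+1) u v' s ≠ 0) :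
    ∃ t : Fin (n+1) × Fin (m+1) → ℤ×ℤ, bigC (a+e1) n m x t ∧ s = phi a n m t := by
  obtain ⟨hB1, hB2, hB3, hB4⟩ := hB
  have hs : ∀ (P : Fin (n+2) × Fin (m+2)) (i k : ℕ) (hi : i < n+2) (hk : k < m+2),
      (P.1 : ℕ) = i → (P.2 : ℕ) = k → s P = s (⟨i, hi⟩, ⟨k, hk⟩) := by
    intro P i k hi hk h1 h2
    congr 1
    exact Prod.ext (Fin.ext h1) (Fin.ext h2)
  have hB1' : ∀ k (hk : k < m+2), s (⟨0, by omega⟩, ⟨k, hk⟩) = a + (k : ℤ) • e1 :=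
    fun k hk => hB1 ⟨k, hk⟩
  have hB2' : ∀ i (hi : i < n+2), s (⟨i, hi⟩, ⟨0, by omega⟩) = a + (i : ℤ) • e1 :=
    fun i hi => hB2 ⟨i, hi⟩
  have hB3' : ∀ i (hi : i < n+2), s (⟨i, hi⟩, ⟨m+1, by omega⟩) =
      a + ((m+1 : ℕ) : ℤ) • e1 + (i : ℤ) • e2 := fun i hi => hB3 ⟨i, hi⟩
  have hB4' : ∀ k (hk : k < m+2), s (⟨n+1, by omega⟩, ⟨k, hk⟩) =
      a + (((n+1 : ℕ) : ℤ) + (k : ℤ) - (btmCount (n+1) x k : ℤ)) • e1 +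
        (btmCount (n+1) x k : ℤ) • e2 := fun k hk => hB4 ⟨k, hk⟩
  have hface : ∀ (i : Fin (n+1)) (k : Fin (m+1)),
      faceW q lam ω12 (s (i.castSucc, k.castSucc)) (s (i.castSucc, k.succ))
        (s (i.succ, k.castSucc)) (s (i.succ, k.succ)) (u (n+1 - (i : ℕ)))
        (v' ((k : ℕ) + 1)) ≠ 0 := by
    intro i k hzero
    exact hP (by
      simp only [bigP]
      exact Finset.prod_eq_zero (Finset.mem_univ i)
        (Finset.prod_eq_zero (Finset.mem_univ k) hzero))
  have hface' : ∀ (i k : ℕ) (hi : i < n+1) (hk : k < m+1),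
      faceW q lam ω12 (s (⟨i, by omega⟩, ⟨k, by omega⟩)) (s (⟨i, by omega⟩, ⟨k+1, by omega⟩))
        (s (⟨i+1, by omega⟩, ⟨k, by omega⟩)) (s (⟨i+1, by omega⟩, ⟨k+1, by omega⟩))
        (u (n+1-i)) (v' (k+1)) ≠ 0 := fun i k hi hk => hface ⟨i, hi⟩ ⟨k, hk⟩
  -- corner freezing
  have hc0 : s (⟨1, by omega⟩, ⟨m, by omega⟩) = a + (m : ℤ) • e1 + e1 := by
    have h := hface' 0 m (by omega) (by omega)
    simp only [Nat.zero_add, Nat.sub_zero] at h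
    rw [hB1' m (by omega), hB1' (m+1) (by omega), hB3' 1 (by omega), hVm] at h
    rw [show a + ((m+1 : ℕ) : ℤ) • e1 = a + (m : ℤ) • e1 + e1 by push_cast; module] at h
    rw [show ((1 : ℕ) : ℤ) • e2 = e2 by push_cast; module] at h
    exact freeze_corner q lam ω12 h
  -- first-row freezing
  have hrow : ∀ d k (hk : k + d = m),
      s (⟨1, by omega⟩, ⟨k, by omega⟩) = a + (k : ℤ) • e1 + e1 := by
    intro d
    induction d with
    | zero =>
      intro k hk
      obtain rfl : k = m := by omega
      exact hc0
    | succ d ih =>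
      intro k hk
      have hnext := ih (k+1) (by omega)
      have h := hface' 0 k (by omega) (by omega)
      simp only [Nat.zero_add, Nat.sub_zero] at h
      rw [hB1' k (by omega), hB1' (k+1) (by omega), hnext] at h
      rw [show a + ((k+1 : ℕ) : ℤ) • e1 = a + (k : ℤ) • e1 + e1 by push_cast; module] at h
      exact freeze_row q lam ω12 h
  have hR : ∀ k (hk : k ≤ m), s (⟨1, by omega⟩, ⟨k, by omega⟩) = a + (k : ℤ) • e1 + e1 :=
    fun k hk => hrow (m - k) k (by omega)
  -- last-column freezing
  have hcol : ∀ i (hi : i ≤ n), s (⟨i+1, by omega⟩, ⟨m, by omega⟩) =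
      a + ((m+1 : ℕ) : ℤ) • e1 + (i : ℤ) • e2 := by
    intro i
    induction i with
    | zero =>
      intro _
      exact hc0.trans (by push_cast; module)
    | succ i ih =>
      intro hi
      have hprev := ih (by omega)
      have h := hface' (i+1) m (by omega) (by omega)
      rw [hprev, hB3' (i+1) (by omega), hB3' (i+1+1) (by omega)] at h
      rw [show a + ((m+1 : ℕ) : ℤ) • e1 + ((i+1+1 : ℕ) : ℤ) • e2
            = a + ((m+1 : ℕ) : ℤ) • e1 + (i : ℤ) • e2 + e2 + e2 by push_cast; module] at h
      rw [show a + ((m+1 : ℕ) : ℤ) • e1 + ((i+1 : ℕ) : ℤ) • e2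
            = a + ((m+1 : ℕ) : ℤ) • e1 + (i : ℤ) • e2 + e2 by push_cast; module] at h
      have hfr := freeze_col q lam ω12 h
      rw [hfr]
      push_cast
      module
  -- assemble
  refine ⟨fun p => s (⟨(p.1 : ℕ)+1, by have := p.1.isLt; omega⟩,
      ⟨(p.2 : ℕ), by have := p.2.isLt; omega⟩), ⟨?_, ?_, ?_, ?_⟩, ?_⟩
  · intro k
    exact (hR (k : ℕ) (by have := k.isLt; omega)).trans (by module)
  · intro i
    exact (hB2' ((i : ℕ)+1) (by have := i.isLt; omega)).trans (by push_cast; module)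
  · intro i
    exact (hcol (i : ℕ) (by have := i.isLt; omega)).trans (by push_cast; module)
  · intro k
    refine (hB4' (k : ℕ) (by have := k.isLt; omega)).trans ?_
    rw [btm_drop hxmono hxN (k : ℕ) (by have := k.isLt; omega)]
    push_cast
    module
  · funext p
    obtain ⟨i, k⟩ := p
    by_cases hi : (i : ℕ) = 0
    · rw [phi_zero a n m _ i k hi,
        hs (i, k) 0 (k : ℕ) (by omega) k.isLt hi rfl, hB1' (k : ℕ) k.isLt]
    · by_cases hk : (k : ℕ) = m+1
      · rw [phi_last a n m _ i k hi hk,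
          hs (i, k) (i : ℕ) (m+1) i.isLt (by omega) rfl hk, hB3' (i : ℕ) i.isLt]
      · have hklt : (k : ℕ) < m+1 := by have := k.isLt; omega
        have h1 : ((⟨(i : ℕ) - 1, by have := i.isLt; omega⟩ : Fin (n+1)) : ℕ) + 1 = (i : ℕ) := by
          simp only [Fin.val_mk]
          omega
        have h2 : ((⟨(k : ℕ), hklt⟩ : Fin (m+1)) : ℕ) = (k : ℕ) := rfl
        rw [phi_mid a n m _ i k hi hklt _ _ h1 h2]
        exact hs (i, k) ((i : ℕ) - 1 + 1) (k : ℕ) (by have := i.isLt; omega) k.isLt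
          (by show (i : ℕ) = (i : ℕ) - 1 + 1; omega) rfl

end L3

lemma prod_fin_icc (n : ℕ) (f : ℕ → ℂ) :
    ∏ j ∈ Finset.Icc 1 n, f j = ∏ k : Fin n, f ((k : ℕ)+1) := by
  rw [Fin.prod_univ_eq_prod_range (fun k => f (k+1))]
  rw [show Finset.Icc 1 n = Finset.Ico 1 (n+1) by rfl, Finset.prod_Ico_eq_prod_range]
  simp [add_comm]

lemma prod_fin_icc_rev (n : ℕ) (f : ℕ → ℂ) :
    ∏ j ∈ Finset.Icc 1 n, f j = ∏ k : Fin n, f (n - (k : ℕ)) := by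
  rw [Fin.prod_univ_eq_prod_range (fun k => f (n - k))]
  rw [show Finset.Icc 1 n = Finset.Ico 1 (n+1) by rfl, Finset.prod_Ico_eq_prod_range]
  rw [← Finset.prod_range_reflect]
  refine Finset.prod_congr rfl fun j hj => ?_
  simp only [Finset.mem_range] at hj
  congr 1
  omega

section L2

variable {q : ℝ} {lam ω12 : ℂ} {n m : ℕ} {x : ℕ → ℕ} {a : ℤ×ℤ}

lemma L2 (hbrA : ∀ b : ℤ × ℤ, brak q lam (aSc ω12 b) ≠ 0)
    (u v v' : ℕ → ℂ) (hVm : v' (m+1) = u (n+1)) (hVk : ∀ k, k ≤ m → v' k = v k)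
    (t : Fin (n+1) × Fin (m+1) → ℤ×ℤ) (hS : bigC (a+e1) n m x t) :
    bigP q lam ω12 (n+1) (m+1) u v' (phi a n m t) =
      ((∏ j ∈ Finset.Icc 1 n, brak q lam (1 - u j + u (n+1)) / brak q lam 1) *
       (∏ j ∈ Finset.Icc 1 m, brak q lam (1 + u (n+1) - v j) / brak q lam 1)) *
      bigP q lam ω12 n m u v t := by
  obtain ⟨hS1, hS2, hS3, hS4⟩ := hS
  have hrow0 : (∏ k : Fin (m+1), faceW q lam ω12
      (phi a n m t ((0 : Fin (n+1)).castSucc, k.castSucc))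
      (phi a n m t ((0 : Fin (n+1)).castSucc, k.succ))
      (phi a n m t ((0 : Fin (n+1)).succ, k.castSucc))
      (phi a n m t ((0 : Fin (n+1)).succ, k.succ))
      (u (n+1 - ((0 : Fin (n+1)) : ℕ))) (v' ((k : ℕ)+1))) =
      ∏ j ∈ Finset.Icc 1 m, brak q lam (1 + u (n+1) - v j) / brak q lam 1 := by
    rw [Fin.prod_univ_castSucc]
    have hcorner : faceW q lam ω12
        (phi a n m t ((0 : Fin (n+1)).castSucc, (Fin.last m).castSucc))
        (phi a n m t ((0 : Fin (n+1)).castSucc, (Fin.last m).succ))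
        (phi a n m t ((0 : Fin (n+1)).succ, (Fin.last m).castSucc))
        (phi a n m t ((0 : Fin (n+1)).succ, (Fin.last m).succ))
        (u (n+1 - ((0 : Fin (n+1)) : ℕ))) (v' ((Fin.last m : ℕ)+1)) = 1 := by
      have ha : phi a n m t ((0 : Fin (n+1)).castSucc, (Fin.last m).castSucc)
          = a + (m : ℤ) • e1 := by
        rw [phi_zero a n m t _ _ (by simp)]
        simp
      have hb : phi a n m t ((0 : Fin (n+1)).castSucc, (Fin.last m).succ)
          = a + (m : ℤ) • e1 + e1 := by
        rw [phi_zero a n m t _ _ (by simp)]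
        simp only [Fin.val_succ, Fin.val_last]
        push_cast
        module
      have hc : phi a n m t ((0 : Fin (n+1)).succ, (Fin.last m).castSucc)
          = a + (m : ℤ) • e1 + e1 := by
        rw [phi_mid a n m t _ _ (by simp) (by simp) 0 (Fin.last m) (by simp) (by simp),
          hS1 (Fin.last m)]
        simp only [Fin.val_last]
        push_cast
        module
      have hd : phi a n m t ((0 : Fin (n+1)).succ, (Fin.last m).succ)
          = a + (m : ℤ) • e1 + e1 + e2 := by
        rw [phi_last a n m t _ _ (by simp) (by simp)]
        simp only [Fin.val_succ, Fin.val_zero]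
        push_cast
        module
      have hv : v' ((Fin.last m : ℕ)+1) = u (n+1) := by
        rw [Fin.val_last]
        exact hVm
      have hu : n+1 - ((0 : Fin (n+1)) : ℕ) = n+1 := by simp
      rw [ha, hb, hc, hd, hv, hu, faceW_eval5 q lam ω12 _ _ (hbrA _)]
    rw [hcorner, mul_one, prod_fin_icc m (fun j => brak q lam (1 + u (n+1) - v j) / brak q lam 1)]
    refine Finset.prod_congr rfl fun k' _ => ?_
    have hkm : (k' : ℕ) < m := k'.isLt
    have ha : phi a n m t ((0 : Fin (n+1)).castSucc, k'.castSucc.castSucc)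
        = a + ((k' : ℕ) : ℤ) • e1 := by
      rw [phi_zero a n m t _ _ (by simp)]
      simp
    have hb : phi a n m t ((0 : Fin (n+1)).castSucc, k'.castSucc.succ)
        = a + ((k' : ℕ) : ℤ) • e1 + e1 := by
      rw [phi_zero a n m t _ _ (by simp)]
      simp only [Fin.val_succ, Fin.coe_castSucc]
      push_cast
      module
    have hc : phi a n m t ((0 : Fin (n+1)).succ, k'.castSucc.castSucc)
        = a + ((k' : ℕ) : ℤ) • e1 + e1 := by
      rw [phi_mid a n m t _ _ (by simp) (by simp <;> omega) 0 k'.castSucc (by simp) (by simp),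
        hS1 k'.castSucc]
      simp only [Fin.coe_castSucc]
      module
    have hd : phi a n m t ((0 : Fin (n+1)).succ, k'.castSucc.succ)
        = a + ((k' : ℕ) : ℤ) • e1 + e1 + e1 := by
      rw [phi_mid a n m t _ _ (by simp) (by simp <;> omega) 0 k'.succ (by simp) (by simp),
        hS1 k'.succ]
      simp only [Fin.val_succ]
      push_cast
      module
    have hv : v' ((k'.castSucc : ℕ)+1) = v ((k' : ℕ)+1) := by
      rw [Fin.coe_castSucc]
      exact hVk _ (by omega)
    have hu : n+1 - ((0 : Fin (n+1)) : ℕ) = n+1 := by simp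
    rw [ha, hb, hc, hd, hv, hu, faceW_eval1, ← add_sub_assoc]
  have hrows : ∀ i' : Fin n, (∏ k : Fin (m+1), faceW q lam ω12
      (phi a n m t (i'.succ.castSucc, k.castSucc))
      (phi a n m t (i'.succ.castSucc, k.succ))
      (phi a n m t (i'.succ.succ, k.castSucc))
      (phi a n m t (i'.succ.succ, k.succ))
      (u (n+1 - (i'.succ : ℕ))) (v' ((k : ℕ)+1))) =
      (∏ k' : Fin m, faceW q lam ω12 (t (i'.castSucc, k'.castSucc)) (t (i'.castSucc, k'.succ))
        (t (i'.succ, k'.castSucc)) (t (i'.succ, k'.succ)) (u (n - (i' : ℕ))) (v ((k' : ℕ)+1))) *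
      (brak q lam (1 - u (n - (i' : ℕ)) + u (n+1)) / brak q lam 1) := by
    intro i'
    have hin : (i' : ℕ) < n := i'.isLt
    have hu : n+1 - (i'.succ : ℕ) = n - (i' : ℕ) := by
      simp only [Fin.val_succ]
      omega
    rw [Fin.prod_univ_castSucc]
    congr 1
    · refine Finset.prod_congr rfl fun k' _ => ?_
      have hkm : (k' : ℕ) < m := k'.isLt
      have ha : phi a n m t (i'.succ.castSucc, k'.castSucc.castSucc) = t (i'.castSucc, k'.castSucc) := by
        rw [phi_mid a n m t _ _ (by simp) (by simp <;> omega) i'.castSucc k'.castSucc (by simp) (by simp)]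
      have hb : phi a n m t (i'.succ.castSucc, k'.castSucc.succ) = t (i'.castSucc, k'.succ) := by
        rw [phi_mid a n m t _ _ (by simp) (by simp <;> omega) i'.castSucc k'.succ (by simp) (by simp)]
      have hc : phi a n m t (i'.succ.succ, k'.castSucc.castSucc) = t (i'.succ, k'.castSucc) := by
        rw [phi_mid a n m t _ _ (by simp) (by simp <;> omega) i'.succ k'.castSucc (by simp) (by simp)]
      have hd : phi a n m t (i'.succ.succ, k'.castSucc.succ) = t (i'.succ, k'.succ) := by
        rw [phi_mid a n m t _ _ (by simp) (by simp <;> omega) i'.succ k'.succ (by simp) (by simp)]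
      have hv : v' ((k'.castSucc : ℕ)+1) = v ((k' : ℕ)+1) := by
        rw [Fin.coe_castSucc]
        exact hVk _ (by omega)
      rw [ha, hb, hc, hd, hv, hu]
    · have ha : phi a n m t (i'.succ.castSucc, (Fin.last m).castSucc)
          = a + e1 + (m : ℤ) • e1 + ((i' : ℕ) : ℤ) • e2 := by
        rw [phi_mid a n m t _ _ (by simp) (by simp) i'.castSucc (Fin.last m) (by simp) (by simp),
          hS3 i'.castSucc]
        simp
      have hb : phi a n m t (i'.succ.castSucc, (Fin.last m).succ)
          = a + e1 + (m : ℤ) • e1 + ((i' : ℕ) : ℤ) • e2 + e2 := by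
        rw [phi_last a n m t _ _ (by simp) (by simp)]
        simp only [Fin.val_succ, Fin.coe_castSucc]
        push_cast
        module
      have hc : phi a n m t (i'.succ.succ, (Fin.last m).castSucc)
          = a + e1 + (m : ℤ) • e1 + ((i' : ℕ) : ℤ) • e2 + e2 := by
        rw [phi_mid a n m t _ _ (by simp) (by simp) i'.succ (Fin.last m) (by simp) (by simp),
          hS3 i'.succ]
        simp only [Fin.val_succ]
        push_cast
        module
      have hd : phi a n m t (i'.succ.succ, (Fin.last m).succ)
          = a + e1 + (m : ℤ) • e1 + ((i' : ℕ) : ℤ) • e2 + e2 + e2 := by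
        rw [phi_last a n m t _ _ (by simp) (by simp)]
        simp only [Fin.val_succ]
        push_cast
        module
      have hv : v' ((Fin.last m : ℕ)+1) = u (n+1) := by
        rw [Fin.val_last]
        exact hVm
      rw [ha, hb, hc, hd, hv, hu, faceW_eval2]
      rw [show (1 : ℂ) - (u (n - (i' : ℕ)) - u (n+1)) = 1 - u (n - (i' : ℕ)) + u (n+1) by ring]
  simp only [bigP]
  rw [Fin.prod_univ_succ, hrow0, Finset.prod_congr rfl fun i' _ => hrows i',
    Finset.prod_mul_distrib]
  rw [show (∏ i' : Fin n, brak q lam (1 - u (n - (i' : ℕ)) + u (n+1)) / brak q lam 1)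
      = ∏ j ∈ Finset.Icc 1 n, brak q lam (1 - u j + u (n+1)) / brak q lam 1 from
      (prod_fin_icc_rev n (fun j => brak q lam (1 - u j + u (n+1)) / brak q lam 1)).symm]
  ring

end L2

lemma key (q : ℝ) (lam ω12 : ℂ) {n m : ℕ} (u v : ℕ → ℂ) (x : ℕ → ℕ)
    (hxmono : ∀ j k, 1 ≤ j → j < k → k ≤ n+1 → x j < x k) (hxN : x (n+1) = m+1)
    (a : ℤ×ℤ) (hbrA : ∀ b : ℤ × ℤ, brak q lam (aSc ω12 b) ≠ 0) :
    partW q lam ω12 (m+1) (n+1) u (Function.update v (m+1) (u (n+1))) x a =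
      (∏ j ∈ Finset.Icc 1 n, brak q lam (1 - u j + u (n+1)) / brak q lam 1) *
      (∏ j ∈ Finset.Icc 1 m, brak q lam (1 + u (n+1) - v j) / brak q lam 1) *
      partW q lam ω12 m n u v x (a+e1) := by
  classical
  set v' : ℕ → ℂ := Function.update v (m+1) (u (n+1)) with hv'
  have hVm : v' (m+1) = u (n+1) := Function.update_self _ _ _
  have hVk : ∀ k, k ≤ m → v' k = v k := fun k hk => Function.update_of_ne (by omega) _ _
  rw [partW_eq, partW_eq, ← tsum_mul_left]
  refine tsum_eq_tsum_of_ne_zero_bij (fun tt => phi a n m tt.1) ?_ ?_ ?_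
  · intro t1 t2 h
    exact Subtype.ext (phi_injective a n m h)
  · intro s hs
    simp only [Function.mem_support] at hs
    by_cases hB : bigC a (n+1) (m+1) x s
    · rw [if_pos hB] at hs
      obtain ⟨t, htS, hst⟩ := L3 hxmono hxN hVm s hB hs
      refine ⟨⟨t, ?_⟩, hst.symm⟩
      simp only [Function.mem_support, if_pos htS]
      have hL2 := L2 hbrA u v v' hVm hVk t htS
      rw [← hst] at hL2
      rw [← hL2]
      exact hs
    · rw [if_neg hB] at hs
      exact absurd rfl hs
  · rintro ⟨t, ht⟩
    simp only [Function.mem_support] at ht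
    by_cases htS : bigC (a+e1) n m x t
    · have hBB := L1 hxmono hxN t htS
      rw [if_pos hBB, if_pos htS]
      exact L2 hbrA u v v' hVm hVk t htS
    · rw [if_neg htS, mul_zero] at ht
      exact absurd rfl ht
/-- if `x_N = M`, the partition function evaluated at `v_M = u_N` satisfies
`W_{M,N}(…)|_{v_M=u_N} = ∏_{j=1}^{N-1}([1-u_j+u_N]/[1]) ∏_{j=1}^{M-1}([1+u_N-v_j]/[1])
  · W_{M-1,N-1}(u₁,…,u_{N-1}|v₁,…,v_{M-1}|x₁,…,x_{N-1}|a₁₂+1)`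
(the shift `a₁₂ ↦ a₁₂ + 1` is realized by the corner state vector `a⃗ + ê₁`). -/
theorem statement7 (q : ℝ) (hq0 : 0 < q) (hq1 : q < 1) (lam : ℂ) (hlam : lam ≠ 0)
    (ω12 : ℂ) (M N : ℕ) (hN : 1 ≤ N) (hNM : N ≤ M)
    (u v : ℕ → ℂ) (x : ℕ → ℕ)
    (hx1 : 1 ≤ x 1) (hxmono : ∀ j k, 1 ≤ j → j < k → k ≤ N → x j < x k)
    (hxN : x N = M) (a : ℤ × ℤ)
    (hbr1 : brak q lam 1 ≠ 0)
    (hbrA : ∀ b : ℤ × ℤ, brak q lam (aSc ω12 b) ≠ 0)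
    (hbrA' : ∀ b : ℤ × ℤ, brak q lam (-aSc ω12 b) ≠ 0) :
    partW q lam ω12 M N u (Function.update v M (u N)) x a =
      (∏ j ∈ Finset.Icc 1 (N - 1), brak q lam (1 - u j + u N) / brak q lam 1) *
      (∏ j ∈ Finset.Icc 1 (M - 1), brak q lam (1 + u N - v j) / brak q lam 1) *
      partW q lam ω12 (M - 1) (N - 1) u v x (a + e1) := by
  obtain ⟨n, rfl⟩ : ∃ n, N = n + 1 := ⟨N - 1, by omega⟩
  obtain ⟨m, rfl⟩ : ∃ m, M = m + 1 := ⟨M - 1, by omega⟩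
  simp only [Nat.add_sub_cancel]
  exact key q lam ω12 u v x hxmono hxN a hbrA

end
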